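/- With the explicit presentation below, the linear map η : g → C(g) ⊗ g defined on the basis by η(a_i) = Σ_{s=1}^n x_{s i} ⊗ a_s is a morphism of Lie algebras, where C(g) ⊗ g carries the base-change Lie bracket. -/

import Mathlib

/-!
Statement 2: Let `g` be a Lie algebra over a field `K` of characteristic zero with basis
`a_1, …, a_n` and structure constants `α^s_{i j}` (so `⁅a_i, a_j⁆ = Σ_s α^s_{i j} a_s`).
Let `C(g)` be the quotient of the polynomial algebra `K[X_{s i}]` by the ideal `J` generated
by the universal polynomials
`P_{(a,i,j)} = Σ_u α^u_{i j} X_{a u} − Σ_{s,t} α^a_{s t} X_{s i} X_{t j}`,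
and let `η : g → C(g) ⊗ g` be the linear map with `η(a_i) = Σ_s x_{s i} ⊗ a_s`.
Then `η` is a morphism of Lie algebras, where `C(g) ⊗ g` carries the base-change bracket.
-/

open TensorProduct

universe u

private lemma my_sum_lie {L M : Type*} [LieRing L] [AddCommGroup M] [LieRingModule L M]
    {ι : Type*} (s : Finset ι) (f : ι → L) (m : M) :
    ⁅∑ i ∈ s, f i, m⁆ = ∑ i ∈ s, ⁅f i, m⁆ :=
  map_sum (AddMonoidHom.mk' (fun x => ⁅x, m⁆) (fun a b => add_lie a b m)) f s

private lemma my_lie_sum {L M : Type*} [LieRing L] [AddCommGroup M] [LieRingModule L M]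
    {ι : Type*} (s : Finset ι) (f : ι → M) (y : L) :
    ⁅y, ∑ i ∈ s, f i⁆ = ∑ i ∈ s, ⁅y, f i⁆ :=
  map_sum (AddMonoidHom.mk' (fun x => ⁅y, x⁆) (fun a b => lie_add y a b)) f s

private lemma tsmul_lie {K : Type u} [Field K] {A : Type u} [CommRing A] [Algebra K A]
    {g : Type u} [LieRing g] [LieAlgebra K g] (c : K) (u v : A ⊗[K] g) :
    ⁅c • u, v⁆ = c • ⁅u, v⁆ := by
  induction u using TensorProduct.induction_on with
  | zero => rw [smul_zero, zero_lie, smul_zero]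
  | tmul a x =>
    induction v using TensorProduct.induction_on with
    | zero => rw [lie_zero, lie_zero, smul_zero]
    | tmul b' y =>
      rw [TensorProduct.smul_tmul', LieAlgebra.ExtendScalars.bracket_tmul,
        LieAlgebra.ExtendScalars.bracket_tmul, smul_mul_assoc, TensorProduct.smul_tmul']
    | add v1 v2 h1 h2 => rw [lie_add, lie_add, smul_add, h1, h2]
  | add u1 u2 h1 h2 => rw [smul_add, add_lie, add_lie, h1, h2, smul_add]

private lemma lie_tsmul {K : Type u} [Field K] {A : Type u} [CommRing A] [Algebra K A]
    {g : Type u} [LieRing g] [LieAlgebra K g] (c : K) (u v : A ⊗[K] g) :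
    ⁅u, c • v⁆ = c • ⁅u, v⁆ := by
  induction v using TensorProduct.induction_on with
  | zero => rw [smul_zero, lie_zero, smul_zero]
  | tmul a x =>
    induction u using TensorProduct.induction_on with
    | zero => rw [zero_lie, zero_lie, smul_zero]
    | tmul b' y =>
      rw [TensorProduct.smul_tmul', LieAlgebra.ExtendScalars.bracket_tmul,
        LieAlgebra.ExtendScalars.bracket_tmul, mul_smul_comm, TensorProduct.smul_tmul']
    | add v1 v2 h1 h2 => rw [add_lie, add_lie, smul_add, h1, h2]
  | add u1 u2 h1 h2 => rw [smul_add, lie_add, lie_add, h1, h2, smul_add]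

private lemma eta_aux
    (K : Type u) [Field K]
    (g : Type u) [LieRing g] [LieAlgebra K g]
    (A : Type u) [CommRing A] [Algebra K A]
    (n : ℕ) (b : Module.Basis (Fin n) K g)
    (α : Fin n → Fin n → Fin n → K)
    (hα : ∀ i j : Fin n, ⁅b i, b j⁆ = ∑ s : Fin n, α s i j • b s)
    (ξ : Fin n × Fin n → A)
    (hξ : ∀ a i j : Fin n, (∑ u : Fin n, α u i j • ξ (a, u)) =
      ∑ s : Fin n, ∑ t : Fin n, α a s t • (ξ (s, i) * ξ (t, j)))
    (η : g →ₗ[K] A ⊗[K] g)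
    (hη : η = b.constr K fun i : Fin n => ∑ s : Fin n, ξ (s, i) ⊗ₜ[K] b s) :
    ∀ x y : g, η ⁅x, y⁆ = ⁅η x, η y⁆ := by
  have hb : ∀ i : Fin n, η (b i) = ∑ s : Fin n, ξ (s, i) ⊗ₜ[K] b s := by
    intro i; rw [hη, Module.Basis.constr_basis]
  have key : ∀ i j : Fin n, η ⁅b i, b j⁆ = ⁅η (b i), η (b j)⁆ := by
    intro i j
    have lhs : η ⁅b i, b j⁆ = ∑ a : Fin n,
        (∑ u : Fin n, α u i j • ξ (a, u)) ⊗ₜ[K] b a := by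
      rw [hα, map_sum]
      simp only [map_smul, hb, Finset.smul_sum]
      rw [Finset.sum_comm]
      refine Finset.sum_congr rfl fun a _ => ?_
      rw [TensorProduct.sum_tmul]
      exact Finset.sum_congr rfl fun u _ => TensorProduct.smul_tmul' _ _ _
    have rhs : ⁅η (b i), η (b j)⁆ = ∑ a : Fin n,
        (∑ s : Fin n, ∑ t : Fin n, α a s t • (ξ (s, i) * ξ (t, j))) ⊗ₜ[K] b a := by
      rw [hb, hb, my_sum_lie]
      have step : ∀ s : Fin n,
          ⁅ξ (s, i) ⊗ₜ[K] b s, ∑ t : Fin n, ξ (t, j) ⊗ₜ[K] b t⁆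
          = ∑ a : Fin n, ∑ t : Fin n, (α a s t • (ξ (s, i) * ξ (t, j))) ⊗ₜ[K] b a := by
        intro s
        rw [my_lie_sum, Finset.sum_comm]
        refine Finset.sum_congr rfl fun t _ => ?_
        rw [LieAlgebra.ExtendScalars.bracket_tmul, hα, TensorProduct.tmul_sum]
        refine Finset.sum_congr rfl fun a _ => ?_
        rw [tmul_smul, TensorProduct.smul_tmul']
      rw [Finset.sum_congr rfl fun s _ => step s, Finset.sum_comm]
      refine Finset.sum_congr rfl fun a _ => ?_
      rw [TensorProduct.sum_tmul]
      exact Finset.sum_congr rfl fun s _ => (TensorProduct.sum_tmul _ _ _).symm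
    rw [lhs, rhs]
    exact Finset.sum_congr rfl fun a _ => by rw [hξ a i j]
  intro x y
  conv_lhs => rw [← b.sum_repr x, ← b.sum_repr y]
  conv_rhs => rw [← b.sum_repr x, ← b.sum_repr y]
  rw [my_sum_lie, map_sum, map_sum, my_sum_lie]
  refine Finset.sum_congr rfl fun i _ => ?_
  rw [my_lie_sum, map_sum, map_sum, my_lie_sum]
  refine Finset.sum_congr rfl fun j _ => ?_
  rw [smul_lie (b.repr x i) (b i) (b.repr y j • b j),
    lie_smul (b.repr y j) (b i) (b j), map_smul, map_smul, key i j,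
    map_smul, map_smul, tsmul_lie, lie_tsmul]

set_option maxHeartbeats 1000000 in
set_option synthInstance.maxHeartbeats 1000000 in
theorem eta_bracket_preserving
    (K : Type u) [Field K] [CharZero K]
    (g : Type u) [LieRing g] [LieAlgebra K g]
    (n : ℕ) (b : Module.Basis (Fin n) K g)
    (α : Fin n → Fin n → Fin n → K)
    (hα : ∀ i j : Fin n, ⁅b i, b j⁆ = ∑ s : Fin n, α s i j • b s)
    (J : Ideal (MvPolynomial (Fin n × Fin n) K))
    (hJ : J = Ideal.span (Set.range fun p : Fin n × Fin n × Fin n =>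
      (∑ u : Fin n, MvPolynomial.C (α u p.2.1 p.2.2) * MvPolynomial.X (p.1, u)) -
        ∑ s : Fin n, ∑ t : Fin n,
          MvPolynomial.C (α p.1 s t) * MvPolynomial.X (s, p.2.1) * MvPolynomial.X (t, p.2.2)))
    (η : g →ₗ[K] (MvPolynomial (Fin n × Fin n) K ⧸ J) ⊗[K] g)
    (hη : η = b.constr K fun i : Fin n =>
      ∑ s : Fin n, Ideal.Quotient.mk J (MvPolynomial.X (s, i)) ⊗ₜ[K] b s) :
    ∀ x y : g, η ⁅x, y⁆ = ⁅η x, η y⁆ := by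
  refine eta_aux K g (MvPolynomial (Fin n × Fin n) K ⧸ J) n b α hα
    (fun p => Ideal.Quotient.mk J (MvPolynomial.X p)) ?_ η hη
  intro a i j
  have hsmul : ∀ (c : K) (p : MvPolynomial (Fin n × Fin n) K),
      c • Ideal.Quotient.mk J p = Ideal.Quotient.mk J (MvPolynomial.C c * p) := fun c p => by
    rw [← MvPolynomial.smul_eq_C_mul, ← Ideal.Quotient.mkₐ_eq_mk K J, map_smul]
  simp only [← map_mul, hsmul, ← map_sum]
  rw [Ideal.Quotient.eq, hJ]
  exact Ideal.subset_span ⟨(a, i, j), by ring_nf⟩
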